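/- Let n, k ∈ ℕ with k < n, and let 𝒯 = (T,w) and 𝒯′ = (T′,w′) be weighted trees with leaf set [n] such that 𝒯′ is obtained from 𝒯 by a k-IO operation on an edge e. Then 𝒯 and 𝒯′ have the same k-dissimilarity vector: D_I(𝒯′) = D_I(𝒯) for every k-subset I of [n]. -/

import Mathlib

/-- A weighted finite tree with leaf set labelled by `Fin n`:
a finite vertex type `V`, a tree `G` on `V`, an injective labelling `leaf` of the
degree-one vertices by `Fin n` (every vertex of degree one is a labelled leaf),
and a weight function `w` on edges (zero off the edge set). -/
structure WTree (n : ℕ) where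
  V : Type
  fintypeV : Fintype V
  G : SimpleGraph V
  isTree : G.IsTree
  leaf : Fin n → V
  leafInj : Function.Injective leaf
  leafSpec : ∀ v : V, (G.neighborSet v).ncard = 1 ↔ v ∈ Set.range leaf
  w : Sym2 V → ℝ
  wSupport : ∀ e, e ∉ G.edgeSet → w e = 0

namespace WTree

variable {n : ℕ}

/-- The degree of a vertex. -/
noncomputable def deg (T : WTree n) (v : T.V) : ℕ := (T.G.neighborSet v).ncard

/-- A node is a vertex of degree `> 2`. -/
def IsNode (T : WTree n) (v : T.V) : Prop := 2 < T.deg v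

/-- A tree is essential if it has no vertices of degree `2`. -/
def Essential (T : WTree n) : Prop := ∀ v : T.V, T.deg v ≠ 2

/-- The set of edges lying on the path between two vertices. -/
def pathEdges (T : WTree n) (u v : T.V) : Set (Sym2 T.V) :=
  {e | ∃ p : T.G.Walk u v, p.IsPath ∧ e ∈ p.edges}

/-- The edge set of the minimal subtree containing the leaves in `S`. -/
def subtreeEdges (T : WTree n) (S : Set (Fin n)) : Set (Sym2 T.V) :=
  {e | ∃ i ∈ S, ∃ j ∈ S, e ∈ T.pathEdges (T.leaf i) (T.leaf j)}

/-- `D_I(T)`: the weight of the minimal subtree of `T` containing the leaves in `I`. -/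
noncomputable def D (T : WTree n) (I : Finset (Fin n)) : ℝ :=
  ∑ᶠ e ∈ T.subtreeEdges ↑I, T.w e

/-- The total weight of the tree. -/
noncomputable def Dtot (T : WTree n) : ℝ := ∑ᶠ e ∈ T.G.edgeSet, T.w e

/-- An edge is a twig edge if it lies on the path from some leaf to the nearest node. -/
def IsTwigEdge (T : WTree n) (e : Sym2 T.V) : Prop :=
  ∃ (i : Fin n) (v : T.V), T.IsNode v ∧
    ∃ p : T.G.Walk (T.leaf i) v, p.IsPath ∧
      (∀ u ∈ p.support, T.IsNode u → u = v) ∧ e ∈ p.edges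

/-- Internal-nonzero-weighted: every internal (non-twig) edge has nonzero weight. -/
def InternalNonzero (T : WTree n) : Prop :=
  ∀ e ∈ T.G.edgeSet, ¬ T.IsTwigEdge e → T.w e ≠ 0

/-- Positive-weighted: all edge weights are positive. -/
def PositiveWeighted (T : WTree n) : Prop := ∀ e ∈ T.G.edgeSet, 0 < T.w e

/-- The leaves lying on the side of vertex `a` after removing the edge `e`. -/
def sideLeaves (T : WTree n) (e : Sym2 T.V) (a : T.V) : Set (Fin n) :=
  {i | e ∉ T.pathEdges (T.leaf i) a}

/-- A pseudostar of kind `(n, k)`: every edge divides the leaf set into two parts,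
at least one of which has cardinality `≥ k`. -/
def IsPseudostar (T : WTree n) (k : ℕ) : Prop :=
  ∀ a b : T.V, T.G.Adj a b →
    k ≤ (T.sideLeaves s(a, b) a).ncard ∨ k ≤ (T.sideLeaves s(a, b) b).ncard

/-- `T` realizes the family `D₀` of `k`-weights. -/
def Realizes (T : WTree n) (k : ℕ) (D₀ : Finset (Fin n) → ℝ) : Prop :=
  ∀ I : Finset (Fin n), I.card = k → T.D I = D₀ I

/-- Two leaves are neighbours if the path between them contains exactly one node. -/
def Neighbours (T : WTree n) (i j : Fin n) : Prop :=
  i ≠ j ∧ ∃ p : T.G.Walk (T.leaf i) (T.leaf j), p.IsPath ∧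
    ∃! v : T.V, v ∈ p.support ∧ T.IsNode v

/-- The Buneman index `⟨i,j | l,m⟩` holds iff the paths `i–j` and `l–m` are disjoint,
equivalently in `T|_{i,j,l,m}` the leaves `i,j` are neighbours, `l,m` are neighbours
and `i,l` are not neighbours. -/
def Buneman (T : WTree n) (i j l m : Fin n) : Prop :=
  ∀ (p : T.G.Walk (T.leaf i) (T.leaf j)) (q : T.G.Walk (T.leaf l) (T.leaf m)),
    p.IsPath → q.IsPath → ∀ v : T.V, v ∈ p.support → v ∉ q.support

/-- The minimal subtree spanned by the four leaves `i,j,l,m` is a star (i.e. all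
pairwise paths share a common vertex). -/
def StarQuartet (T : WTree n) (i j l m : Fin n) : Prop :=
  ∃ c : T.V, ∀ x ∈ ({i, j, l, m} : Set (Fin n)), ∀ y ∈ ({i, j, l, m} : Set (Fin n)),
    x ≠ y → ∀ p : T.G.Walk (T.leaf x) (T.leaf y), p.IsPath → c ∈ p.support

/-- A cherry: a set of leaves pairwise neighbours. -/
def IsCherry (T : WTree n) (C : Set (Fin n)) : Prop :=
  ∀ i ∈ C, ∀ j ∈ C, i ≠ j → T.Neighbours i j

/-- A complete cherry: a cherry not strictly contained in another cherry. -/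
def IsCompleteCherry (T : WTree n) (C : Set (Fin n)) : Prop :=
  T.IsCherry C ∧ ¬ ∃ C' : Set (Fin n), T.IsCherry C' ∧ C ⊂ C'

/-- A star is a tree with only one node. -/
def IsStar (T : WTree n) : Prop := ∃! v : T.V, T.IsNode v

/-- `x` is the median of the three leaves `a,b,c`: it lies on all three pairwise paths. -/
def IsMedian (T : WTree n) (a b c : Fin n) (x : T.V) : Prop :=
  (∀ p : T.G.Walk (T.leaf a) (T.leaf b), p.IsPath → x ∈ p.support) ∧
  (∀ p : T.G.Walk (T.leaf a) (T.leaf c), p.IsPath → x ∈ p.support) ∧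
  (∀ p : T.G.Walk (T.leaf b) (T.leaf c), p.IsPath → x ∈ p.support)

/-- The weight of the twig associated to the leaf `i` (the path from the leaf to the
nearest node). -/
noncomputable def twigWeight (T : WTree n) (i : Fin n) : ℝ :=
  ∑ᶠ e ∈ {e : Sym2 T.V | ∃ v : T.V, T.IsNode v ∧
      ∃ p : T.G.Walk (T.leaf i) v, p.IsPath ∧
        (∀ u ∈ p.support, T.IsNode u → u = v) ∧ e ∈ p.edges}, T.w e

/-- Two weighted trees with leaf set `Fin n` are equal (isomorphic respecting the
leaf labels and the weights). -/
def Isom (T T' : WTree n) : Prop :=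
  ∃ φ : T.V ≃ T'.V,
    (∀ a b : T.V, T.G.Adj a b ↔ T'.G.Adj (φ a) (φ b)) ∧
    (∀ i : Fin n, φ (T.leaf i) = T'.leaf i) ∧
    (∀ a b : T.V, T.w s(a, b) = T'.w s(φ a, φ b))

/-- `T'` is obtained from `T` by the `k`-IO operation on the edge `{a, b}`:
the edge divides the leaf set into two parts each of cardinality `< k`; it is
contracted (via the quotient map `φ`) and `w{a,b}/k` is added to the weight of
every twig (i.e. to every pendant edge). -/
def IOStepOn (k : ℕ) (T T' : WTree n) (a b : T.V) : Prop :=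
  T.G.Adj a b ∧
  (T.sideLeaves s(a, b) a).ncard < k ∧ (T.sideLeaves s(a, b) b).ncard < k ∧
  ∃ φ : T.V → T'.V,
    Function.Surjective φ ∧ φ a = φ b ∧
    (∀ x y : T.V, φ x = φ y → x = y ∨ s(x, y) = s(a, b)) ∧
    (∀ i : Fin n, φ (T.leaf i) = T'.leaf i) ∧
    (∀ u v : T'.V, T'.G.Adj u v ↔
      ∃ x y : T.V, φ x = u ∧ φ y = v ∧ T.G.Adj x y ∧ s(x, y) ≠ s(a, b)) ∧
    (∀ x y : T.V, T.G.Adj x y → s(x, y) ≠ s(a, b) →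
      ((∃ i : Fin n, T.leaf i = x ∨ T.leaf i = y) →
        T'.w s(φ x, φ y) = T.w s(x, y) + T.w s(a, b) / k) ∧
      (¬ (∃ i : Fin n, T.leaf i = x ∨ T.leaf i = y) →
        T'.w s(φ x, φ y) = T.w s(x, y)))

/-- `T'` is obtained from `T` by a `k`-IO operation. -/
def IOStep (k : ℕ) (T T' : WTree n) : Prop := ∃ a b : T.V, IOStepOn k T T' a b

/-- `T'` is obtained from `T` by a `k`-OI operation (the inverse of a `k`-IO operation). -/
def OIStep (k : ℕ) (T T' : WTree n) : Prop := IOStep k T' T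

/-- `T'` is obtained from `T` by inserting an internal edge of weight `0`
(the inverse of contracting it). -/
def InsertZeroStep (T T' : WTree n) : Prop :=
  ∃ a b : T'.V, T'.G.Adj a b ∧ ¬ T'.IsTwigEdge s(a, b) ∧ T'.w s(a, b) = 0 ∧
    ∃ φ : T'.V → T.V,
      Function.Surjective φ ∧ φ a = φ b ∧
      (∀ x y : T'.V, φ x = φ y → x = y ∨ s(x, y) = s(a, b)) ∧
      (∀ i : Fin n, φ (T'.leaf i) = T.leaf i) ∧
      (∀ u v : T.V, T.G.Adj u v ↔
        ∃ x y : T'.V, φ x = u ∧ φ y = v ∧ T'.G.Adj x y ∧ s(x, y) ≠ s(a, b)) ∧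
      (∀ x y : T'.V, T'.G.Adj x y → s(x, y) ≠ s(a, b) → T.w s(φ x, φ y) = T'.w s(x, y))

/-- Replace the weight function of `T`. -/
def reweight (T : WTree n) (w' : Sym2 T.V → ℝ)
    (h : ∀ e, e ∉ T.G.edgeSet → w' e = 0) : WTree n :=
  { T with w := w', wSupport := h }

end WTree



open SimpleGraph

section GraphAux

attribute [local instance] Classical.propDecidable

variable {V : Type} {G : SimpleGraph V} {a b : V}

lemma deg_one_support {u v x : V} (p : G.Walk u v) (hp : p.IsPath)
    (hx : x ∈ p.support) (hdeg : (G.neighborSet x).ncard = 1) : x = u ∨ x = v := by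
  induction p with
  | nil => left; simpa using hx
  | @cons u m v h q ih =>
    rw [Walk.support_cons, List.mem_cons] at hx
    rcases hx with rfl | hx
    · exact Or.inl rfl
    rcases ih hp.of_cons hx with rfl | rfl
    · cases q with
      | nil => exact Or.inr rfl
      | @cons _ m2 _ h' q' =>
        exfalso
        obtain ⟨c, hc⟩ := Set.ncard_eq_one.mp hdeg
        have h1 : u ∈ G.neighborSet x := h.symm
        have h2 : m2 ∈ G.neighborSet x := h'
        rw [hc] at h1 h2
        have : u = m2 := h1.trans h2.symm
        have hns : u ∉ (Walk.cons h' q').support := ((Walk.cons_isPath_iff _ _).mp hp).2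
        have hm2 : m2 ∈ (Walk.cons h' q').support := by
          rw [Walk.support_cons]; exact List.mem_cons_of_mem _ q'.start_mem_support
        exact hns (this ▸ hm2)
    · exact Or.inr rfl

lemma reach_del_of_walk {u v : V} (p : G.Walk u v) :
    (G.deleteEdges {s(a,b)}).Reachable u v ∨
      (G.deleteEdges {s(a,b)}).Reachable u a ∨ (G.deleteEdges {s(a,b)}).Reachable u b := by
  induction p with
  | nil => exact Or.inl (Reachable.refl _)
  | @cons u m v h q ih =>
    by_cases he : s(u, m) = s(a, b)
    · rcases Sym2.eq_iff.mp he with ⟨rfl, rfl⟩ | ⟨rfl, rfl⟩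
      · exact Or.inr (Or.inl (Reachable.refl _))
      · exact Or.inr (Or.inr (Reachable.refl _))
    · have hadj : (G.deleteEdges {s(a,b)}).Adj u m := by
        rw [deleteEdges_adj]; exact ⟨h, by simpa using he⟩
      rcases ih with h' | h' | h'
      · exact Or.inl (hadj.reachable.trans h')
      · exact Or.inr (Or.inl (hadj.reachable.trans h'))
      · exact Or.inr (Or.inr (hadj.reachable.trans h'))

lemma not_reach_del (hbr : ¬ (G.deleteEdges {s(a,b)}).Reachable a b)
    {u v : V} (p : G.Walk u v) (hp : p.IsPath) (he : s(a,b) ∈ p.edges) :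
    ¬ (G.deleteEdges {s(a,b)}).Reachable u v := by
  induction p with
  | nil => simp at he
  | @cons u m v h q ih =>
    by_cases hh : s(u, m) = s(a, b)
    · have hq : s(a,b) ∉ q.edges := by
        have := hp.edges_nodup
        rw [Walk.edges_cons] at this
        rw [← hh]; exact (List.nodup_cons.mp this).1
      have hqr : (G.deleteEdges {s(a,b)}).Reachable m v :=
        ⟨q.toDeleteEdges {s(a,b)} (fun e hme => by simp; rintro rfl; exact hq hme)⟩
      intro huv
      rcases Sym2.eq_iff.mp hh with ⟨rfl, rfl⟩ | ⟨rfl, rfl⟩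
      · exact hbr (huv.trans hqr.symm)
      · exact hbr (hqr.trans huv.symm)
    · have he' : s(a,b) ∈ q.edges := by
        rw [Walk.edges_cons] at he
        rcases List.mem_cons.mp he with h' | h'
        · exact absurd h'.symm hh
        · exact h'
      have hadj : (G.deleteEdges {s(a,b)}).Adj u m := by
        rw [deleteEdges_adj]; exact ⟨h, by simpa using hh⟩
      intro huv
      exact ih hp.of_cons he' (hadj.symm.reachable.trans huv)

end GraphAux


open SimpleGraph

section Contract

attribute [local instance] Classical.propDecidable

variable {V V' : Type} {G : SimpleGraph V} {G' : SimpleGraph V'} {φ : V → V'} {a b : V}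

noncomputable def phiWalk
    (hadj : ∀ u v : V', G'.Adj u v ↔ ∃ x y : V, φ x = u ∧ φ y = v ∧ G.Adj x y ∧ s(x, y) ≠ s(a, b))
    (hab : φ a = φ b) :
    ∀ {u v : V}, G.Walk u v → G'.Walk (φ u) (φ v)
  | _, _, SimpleGraph.Walk.nil => SimpleGraph.Walk.nil
  | u, v, @SimpleGraph.Walk.cons _ _ _ x _ h q =>
      if he : s(u, x) = s(a, b) then
        (phiWalk hadj hab q).copy
          (by rcases Sym2.eq_iff.mp he with ⟨rfl, rfl⟩ | ⟨rfl, rfl⟩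
              · exact hab.symm
              · exact hab) rfl
      else SimpleGraph.Walk.cons ((hadj _ _).mpr ⟨u, x, rfl, rfl, h, he⟩) (phiWalk hadj hab q)

variable (hadj : ∀ u v : V', G'.Adj u v ↔ ∃ x y : V, φ x = u ∧ φ y = v ∧ G.Adj x y ∧ s(x, y) ≠ s(a, b))
  (hab : φ a = φ b)

lemma phiWalk_edges_sub {u v : V} (p : G.Walk u v) :
    ∀ e' ∈ (phiWalk hadj hab p).edges, ∃ e ∈ p.edges, e ≠ s(a, b) ∧ e' = Sym2.map φ e := by
  induction p with
  | nil => intro e' he'; simp [phiWalk] at he'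
  | @cons u x v h q ih =>
    intro e' he'
    rw [phiWalk] at he'
    split_ifs at he' with hc
    · rw [Walk.edges_copy] at he'
      obtain ⟨e, hm, hne, rfl⟩ := ih e' he'
      exact ⟨e, by simp [hm], hne, rfl⟩
    · rw [Walk.edges_cons] at he'
      rcases List.mem_cons.mp he' with rfl | hm
      · exact ⟨s(u, x), by simp, hc, (Sym2.map_pair_eq φ u x).symm⟩
      · obtain ⟨e, hm', hne, rfl⟩ := ih e' hm
        exact ⟨e, by simp [hm'], hne, rfl⟩

lemma phiWalk_mem_edges {u v : V} (p : G.Walk u v) {e : Sym2 V}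
    (he : e ∈ p.edges) (hne : e ≠ s(a, b)) : Sym2.map φ e ∈ (phiWalk hadj hab p).edges := by
  induction p with
  | nil => simp at he
  | @cons u x v h q ih =>
    rw [Walk.edges_cons] at he
    rw [phiWalk]
    split_ifs with hc
    · rw [Walk.edges_copy]
      rcases List.mem_cons.mp he with rfl | hm
      · exact absurd hc hne
      · exact ih hm
    · rw [Walk.edges_cons]
      rcases List.mem_cons.mp he with rfl | hm
      · rw [Sym2.map_pair_eq]; exact List.mem_cons_self
      · exact List.mem_cons_of_mem _ (ih hm)

lemma phiWalk_support_sub {u v : V} (p : G.Walk u v) :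
    ∀ z ∈ (phiWalk hadj hab p).support, ∃ x ∈ p.support, z = φ x := by
  induction p with
  | nil => intro z hz; rw [phiWalk] at hz; simp at hz; exact ⟨_, by simp, hz⟩
  | @cons u x v h q ih =>
    intro z hz
    rw [phiWalk] at hz
    split_ifs at hz with hc
    · rw [Walk.support_copy] at hz
      obtain ⟨w, hw, rfl⟩ := ih z hz
      exact ⟨w, by simp [hw], rfl⟩
    · rw [Walk.support_cons] at hz
      rcases List.mem_cons.mp hz with rfl | hm
      · exact ⟨u, by simp, rfl⟩
      · obtain ⟨w, hw, rfl⟩ := ih z hm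
        exact ⟨w, by simp [hw], rfl⟩


lemma no_triangle (hac : G.IsAcyclic) {x y z : V} (h1 : G.Adj x y) (h2 : G.Adj y z)
    (h3 : G.Adj x z) : False := by
  have hxz : x ≠ z := h3.ne
  have hp1 : (Walk.cons h1 (Walk.cons h2 Walk.nil)).IsPath := by
    rw [Walk.cons_isPath_iff, Walk.cons_isPath_iff]
    refine ⟨⟨Walk.IsPath.nil, by simp [h2.ne]⟩, ?_⟩
    simp only [Walk.support_cons, Walk.support_nil, List.mem_cons, List.mem_singleton]
    push_neg
    exact ⟨h1.ne, hxz, List.not_mem_nil⟩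
  have hp2 : (Walk.cons h3 Walk.nil).IsPath := by simp [hxz]
  have := hac.path_unique ⟨_, hp1⟩ ⟨_, hp2⟩
  have hlen := congrArg (fun p : G.Path x z => p.1.length) this
  simp [Walk.length_cons] at hlen

lemma phiWalk_isPath (hac : G.IsAcyclic) (hadjab : G.Adj a b)
    (hid : ∀ x y : V, φ x = φ y → x = y ∨ s(x, y) = s(a, b))
    {u v : V} (p : G.Walk u v) (hp : p.IsPath) : (phiWalk hadj hab p).IsPath := by
  induction p with
  | nil => rw [phiWalk]; simp
  | @cons u x v h q ih =>
    rw [phiWalk]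
    split_ifs with hc
    · rw [Walk.isPath_copy]
      exact ih hp.of_cons
    · rw [Walk.cons_isPath_iff]
      refine ⟨ih hp.of_cons, ?_⟩
      intro hmem
      obtain ⟨w, hw, hww⟩ := phiWalk_support_sub hadj hab q _ hmem
      have husup : u ∉ q.support := ((Walk.cons_isPath_iff _ _).mp hp).2
      rcases hid u w hww with rfl | hsab
      · exact husup hw
      · -- {u, w} = {a, b}
        have huw : u ≠ w := by
          rcases Sym2.eq_iff.mp hsab with ⟨rfl, rfl⟩ | ⟨rfl, rfl⟩
          · exact hadjab.ne
          · exact hadjab.ne'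
        have hadjuw : G.Adj u w := by
          rcases Sym2.eq_iff.mp hsab with ⟨rfl, rfl⟩ | ⟨rfl, rfl⟩
          · exact hadjab
          · exact hadjab.symm
        have hxw : x ≠ w := by
          rintro rfl; exact hc hsab
        -- two distinct paths from u to w
        have htk : (q.takeUntil w hw).IsPath := hp.of_cons.takeUntil hw
        have husup' : u ∉ (q.takeUntil w hw).support :=
          fun hmem' => husup (Walk.support_takeUntil_subset _ _ hmem')
        have hr : (Walk.cons h (q.takeUntil w hw)).IsPath :=
          (Walk.cons_isPath_iff _ _).mpr ⟨htk, husup'⟩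
        have hp2 : (Walk.cons hadjuw Walk.nil).IsPath := by simp [huw]
        have := hac.path_unique ⟨_, hr⟩ ⟨_, hp2⟩
        have hedg := congrArg (fun p : G.Path u w => p.1.edges) this
        simp only [Walk.edges_cons, Walk.edges_nil] at hedg
        simp only [List.cons.injEq] at hedg
        have hhead : s(u, x) = s(u, w) := hedg.1
        rcases Sym2.eq_iff.mp hhead with ⟨-, rfl⟩ | ⟨rfl, rfl⟩
        · exact hc hsab
        · exact huw rfl

lemma sym2_map_injOn (hac : G.IsAcyclic) (hadjab : G.Adj a b)
    (hid : ∀ x y : V, φ x = φ y → x = y ∨ s(x, y) = s(a, b)) :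
    Set.InjOn (Sym2.map φ) (G.edgeSet \ {s(a, b)}) := by
  have key : ∀ x y x' y' : V, G.Adj x y → G.Adj x' y' → s(x, y) ≠ s(a, b) →
      s(x', y') ≠ s(a, b) → φ x = φ x' → φ y = φ y' → s(x, y) = s(x', y') := by
    intro x y x' y' hxy hxy' hne hne' hx hy
    rcases hid _ _ hx with rfl | hxab
    · rcases hid _ _ hy with rfl | hyab
      · rfl
      · exfalso
        rcases Sym2.eq_iff.mp hyab with ⟨rfl, rfl⟩ | ⟨rfl, rfl⟩
        · exact no_triangle hac hxy.symm hxy' hadjab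
        · exact no_triangle hac hxy'.symm hxy hadjab
    · rcases hid _ _ hy with rfl | hyab
      · exfalso
        rcases Sym2.eq_iff.mp hxab with ⟨rfl, rfl⟩ | ⟨rfl, rfl⟩
        · exact no_triangle hac hxy hxy'.symm hadjab
        · exact no_triangle hac hxy' hxy.symm hadjab
      · exfalso
        apply hne
        rcases Sym2.eq_iff.mp hxab with ⟨rfl, rfl⟩ | ⟨rfl, rfl⟩ <;>
          rcases Sym2.eq_iff.mp hyab with ⟨h1, h2⟩ | ⟨h1, h2⟩ <;> subst h1 <;> first
            | rfl
            | (exact absurd rfl hxy.ne)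
            | (exact Sym2.eq_swap)
  intro e1 h1 e2 h2 heq
  induction e1 using Sym2.ind with
  | _ x y =>
  induction e2 using Sym2.ind with
  | _ x' y' =>
  rw [Sym2.map_pair_eq, Sym2.map_pair_eq] at heq
  have hxy : G.Adj x y := h1.1
  have hxy' : G.Adj x' y' := h2.1
  have hne : s(x, y) ≠ s(a, b) := h1.2
  have hne' : s(x', y') ≠ s(a, b) := h2.2
  rcases Sym2.eq_iff.mp heq with ⟨hx, hy⟩ | ⟨hx, hy⟩
  · exact key x y x' y' hxy hxy' hne hne' hx hy
  · rw [Sym2.eq_swap (a := x') (b := y')] at hne' ⊢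
    exact key x y y' x' hxy hxy'.symm hne hne' hx hy

end Contract

section MainProof

attribute [local instance] Classical.propDecidable

open SimpleGraph in
/-- if `k < n` and `T'` is obtained from the weighted tree `T` (with leaf
set `[n]`) by a `k`-IO operation, then `T` and `T'` have the same `k`-dissimilarity
vector. -/
theorem statement14 (n k : ℕ) (hk : k < n) (T T' : WTree n)
    (h : WTree.IOStep k T T') :
    ∀ I : Finset (Fin n), I.card = k → T'.D I = T.D I := by
  classical
  obtain ⟨a, b, hadjab, hcardA, hcardB, φ, hsurj, hab, hid, hleaf, hadj', hw⟩ := h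
  intro I hI
  letI := T.fintypeV
  letI := T'.fintypeV
  set y0 := T.w s(a, b) with hy0
  have htree := T.isTree
  have hconn : ∀ u v : T.V, T.G.Reachable u v := fun u v => htree.isConnected.preconnected u v
  have hac : T.G.IsAcyclic := htree.IsAcyclic
  have hbr : ¬ (T.G.deleteEdges {s(a, b)}).Reachable a b :=
    ((isBridge_iff.mp ((isAcyclic_iff_forall_adj_isBridge.mp hac) hadjab)))
  have hmem_iff : ∀ u v : T.V,
      s(a, b) ∈ T.pathEdges u v ↔ ¬ (T.G.deleteEdges {s(a, b)}).Reachable u v := by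
    intro u v
    constructor
    · rintro ⟨p, hp, he⟩
      exact not_reach_del hbr p hp he
    · intro hnr
      by_contra hnot
      obtain ⟨p⟩ := hconn u v
      have hnm : s(a, b) ∉ p.toPath.1.edges := fun hmem => hnot ⟨p.toPath.1, p.toPath.2, hmem⟩
      exact hnr ⟨(p.toPath.1).toDeleteEdges {s(a, b)}
        (fun e he => by rw [Set.mem_singleton_iff]; rintro rfl; exact hnm he)⟩
  have hcover : ∀ u : T.V, (T.G.deleteEdges {s(a, b)}).Reachable u a ∨
      (T.G.deleteEdges {s(a, b)}).Reachable u b := by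
    intro u
    obtain ⟨p⟩ := hconn u a
    rcases reach_del_of_walk p with h' | h' | h'
    exacts [Or.inl h', Or.inl h', Or.inr h']
  have hsideA : ∀ i : Fin n, i ∈ T.sideLeaves s(a, b) a ↔
      (T.G.deleteEdges {s(a, b)}).Reachable (T.leaf i) a := by
    intro i
    simp only [WTree.sideLeaves, Set.mem_setOf_eq, hmem_iff, not_not]
  have hsideB : ∀ i : Fin n, i ∈ T.sideLeaves s(a, b) b ↔
      (T.G.deleteEdges {s(a, b)}).Reachable (T.leaf i) b := by
    intro i
    simp only [WTree.sideLeaves, Set.mem_setOf_eq, hmem_iff, not_not]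
  -- a vertex with a labelled leaf is isolated in the deleted graph (towards anything)
  have hisol : ∀ (c d : T.V), T.G.Adj c d → s(c, d) = s(a, b) →
      (∀ i, T.leaf i = c → ∀ u : T.V, (T.G.deleteEdges {s(a, b)}).Reachable u c → u = c) := by
    intro c d hcd hcdab i hic u hu
    have hdeg1 : (T.G.neighborSet c).ncard = 1 := (T.leafSpec c).mpr ⟨i, hic⟩
    obtain ⟨e0, he0⟩ := Set.ncard_eq_one.mp hdeg1
    have hde : d = e0 := by
      have : d ∈ T.G.neighborSet c := hcd
      rw [he0] at this
      exact this
    obtain ⟨p⟩ := hu.symm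
    cases p with
    | nil => rfl
    | @cons _ z _ h' q =>
      exfalso
      rw [SimpleGraph.deleteEdges_adj] at h'
      have hz : z ∈ T.G.neighborSet c := h'.1
      rw [he0] at hz
      apply h'.2
      rw [Set.mem_singleton_iff, ← hcdab]
      rw [hz, ← hde]
  -- neither a nor b is a leaf
  have hnla : ∀ i : Fin n, T.leaf i ≠ a := by
    intro i hia
    have hra := hisol a b hadjab rfl i hia
    have hsub : (Set.univ \ {i} : Set (Fin n)) ⊆ T.sideLeaves s(a, b) b := by
      intro j hj
      rw [hsideB]
      rcases hcover (T.leaf j) with h' | h'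
      · exact absurd (T.leafInj ((hra _ h').trans hia.symm)) hj.2
      · exact h'
    have hge : (Set.univ \ {i} : Set (Fin n)).ncard ≤ (T.sideLeaves s(a, b) b).ncard :=
      Set.ncard_le_ncard hsub (Set.toFinite _)
    have hcard : (Set.univ \ {i} : Set (Fin n)).ncard = n - 1 := by
      rw [Set.ncard_diff (by simp) (Set.toFinite _)]
      simp [Set.ncard_univ]
    omega
  have hnlb : ∀ i : Fin n, T.leaf i ≠ b := by
    intro i hib
    have hra := hisol b a hadjab.symm (Sym2.eq_swap) i hib
    have hsub : (Set.univ \ {i} : Set (Fin n)) ⊆ T.sideLeaves s(a, b) a := by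
      intro j hj
      rw [hsideA]
      rcases hcover (T.leaf j) with h' | h'
      · exact h'
      · exact absurd (T.leafInj ((hra _ h').trans hib.symm)) hj.2
    have hge : (Set.univ \ {i} : Set (Fin n)).ncard ≤ (T.sideLeaves s(a, b) a).ncard :=
      Set.ncard_le_ncard hsub (Set.toFinite _)
    have hcard : (Set.univ \ {i} : Set (Fin n)).ncard = n - 1 := by
      rw [Set.ncard_diff (by simp) (Set.toFinite _)]
      simp [Set.ncard_univ]
    omega
  have hk2 : 2 ≤ k := by
    have hn0 : 0 < n := by omega
    rcases hcover (T.leaf ⟨0, hn0⟩) with h' | h'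
    · have hmem : (⟨0, hn0⟩ : Fin n) ∈ T.sideLeaves s(a, b) a := (hsideA _).mpr h'
      have hpos : 0 < (T.sideLeaves s(a, b) a).ncard :=
        (Set.ncard_pos (Set.toFinite _)).mpr ⟨_, hmem⟩
      omega
    · have hmem : (⟨0, hn0⟩ : Fin n) ∈ T.sideLeaves s(a, b) b := (hsideB _).mpr h'
      have hpos : 0 < (T.sideLeaves s(a, b) b).ncard :=
        (Set.ncard_pos (Set.toFinite _)).mpr ⟨_, hmem⟩
      omega
  -- I meets both sides
  have hIb : ∃ i ∈ I, (T.G.deleteEdges {s(a, b)}).Reachable (T.leaf i) b := by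
    have hns : ¬ (↑I : Set (Fin n)) ⊆ T.sideLeaves s(a, b) a := by
      intro hsubI
      have := Set.ncard_le_ncard hsubI (Set.toFinite _)
      rw [Set.ncard_coe_finset, hI] at this
      omega
    obtain ⟨i, hiI, hni⟩ := Set.not_subset.mp hns
    rw [hsideA] at hni
    rcases hcover (T.leaf i) with h' | h'
    · exact absurd h' hni
    · exact ⟨i, hiI, h'⟩
  have hIa : ∃ j ∈ I, (T.G.deleteEdges {s(a, b)}).Reachable (T.leaf j) a := by
    have hns : ¬ (↑I : Set (Fin n)) ⊆ T.sideLeaves s(a, b) b := by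
      intro hsubI
      have := Set.ncard_le_ncard hsubI (Set.toFinite _)
      rw [Set.ncard_coe_finset, hI] at this
      omega
    obtain ⟨j, hjI, hnj⟩ := Set.not_subset.mp hns
    rw [hsideB] at hnj
    rcases hcover (T.leaf j) with h' | h'
    · exact ⟨j, hjI, h'⟩
    · exact absurd h' hnj
  have habS : s(a, b) ∈ T.subtreeEdges (↑I : Set (Fin n)) := by
    obtain ⟨i, hiI, hib⟩ := hIb
    obtain ⟨j, hjI, hja⟩ := hIa
    refine ⟨i, hiI, j, hjI, (hmem_iff _ _).mpr ?_⟩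
    intro hr
    exact hbr (hja.symm.trans (hr.symm.trans hib))
  -- pendant edges
  have hdeg1 : ∀ i : Fin n, (T.G.neighborSet (T.leaf i)).ncard = 1 :=
    fun i => (T.leafSpec _).mpr ⟨i, rfl⟩
  have hnbex : ∀ i : Fin n, ∃ c, T.G.neighborSet (T.leaf i) = {c} :=
    fun i => Set.ncard_eq_one.mp (hdeg1 i)
  choose nb hnb using hnbex
  have hnb_eq : ∀ (i : Fin n) (x : T.V), T.G.Adj (T.leaf i) x → x = nb i := by
    intro i x hx
    have : x ∈ T.G.neighborSet (T.leaf i) := hx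
    rw [hnb i] at this
    exact this
  have hpend_ne : ∀ j : Fin n, s(T.leaf j, nb j) ≠ s(a, b) := by
    intro j hj
    rcases Sym2.eq_iff.mp hj with ⟨h1, -⟩ | ⟨h1, -⟩
    · exact hnla j h1
    · exact hnlb j h1
  have hpend_mem : ∀ j ∈ I, s(T.leaf j, nb j) ∈ T.subtreeEdges (↑I : Set (Fin n)) := by
    intro j hjI
    obtain ⟨i, hiI, hij⟩ := Finset.exists_mem_ne (s := I) (by omega) j
    have hlne : T.leaf j ≠ T.leaf i := fun hh => hij (T.leafInj hh).symm
    obtain ⟨p0⟩ := hconn (T.leaf j) (T.leaf i)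
    obtain ⟨x, hx, q, hq⟩ := SimpleGraph.Walk.exists_eq_cons_of_ne hlne p0.toPath.1
    have hmem : s(T.leaf j, nb j) ∈ (p0.toPath.1).edges := by
      rw [hq, SimpleGraph.Walk.edges_cons, ← hnb_eq j x hx]
      exact List.mem_cons_self
    exact ⟨j, hjI, i, hiI, p0.toPath.1, p0.toPath.2, hmem⟩
  have hpend_char : ∀ e ∈ T.subtreeEdges (↑I : Set (Fin n)), ∀ j : Fin n,
      T.leaf j ∈ e → j ∈ I ∧ e = s(T.leaf j, nb j) := by
    rintro e ⟨i1, hi1, i2, hi2, p, hp, he⟩ j hj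
    obtain ⟨z, rfl⟩ := Sym2.mem_iff_exists.mp hj
    have hadjz : T.G.Adj (T.leaf j) z :=
      (SimpleGraph.mem_edgeSet T.G).mp (p.edges_subset_edgeSet he)
    have hz : z = nb j := hnb_eq j z hadjz
    have hsup : T.leaf j ∈ p.support := p.fst_mem_support_of_mem_edges he
    rcases deg_one_support p hp hsup (hdeg1 j) with h' | h'
    · exact ⟨by rw [T.leafInj h']; exact hi1, by rw [hz]⟩
    · exact ⟨by rw [T.leafInj h']; exact hi2, by rw [hz]⟩
  have hpend_inj : Function.Injective (fun j : Fin n => s(T.leaf j, nb j)) := by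
    intro j j' hjj
    by_contra hne
    rcases Sym2.eq_iff.mp hjj with ⟨h1, h2⟩ | ⟨h1, h2⟩
    · exact hne (T.leafInj h1)
    · have hlna : T.leaf j' ≠ a := hnla j'
      obtain ⟨p0⟩ := hconn (T.leaf j') a
      obtain ⟨x, hx, q, hq⟩ := SimpleGraph.Walk.exists_eq_cons_of_ne hlna p0.toPath.1
      have hxv : x = nb j' := hnb_eq j' x hx
      have h3 : T.leaf j = x := h1.trans hxv.symm
      have hsup : T.leaf j ∈ p0.toPath.1.support := by
        rw [hq, SimpleGraph.Walk.support_cons]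
        exact List.mem_cons_of_mem _ (by rw [h3]; exact q.start_mem_support)
      rcases deg_one_support p0.toPath.1 p0.toPath.2 hsup (hdeg1 j) with h' | h'
      · exact hne (T.leafInj h')
      · exact hnla j h'
  -- the subtree edge sets correspond
  have hS'eq : T'.subtreeEdges (↑I : Set (Fin n)) =
      Sym2.map φ '' (T.subtreeEdges (↑I : Set (Fin n)) \ {s(a, b)}) := by
    ext e'
    constructor
    · rintro ⟨i, hi, j, hj, p', hp', he'⟩
      obtain ⟨p0⟩ := hconn (T.leaf i) (T.leaf j)
      have hq : ((phiWalk hadj' hab p0.toPath.1).copy (hleaf i) (hleaf j)).IsPath := by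
        rw [SimpleGraph.Walk.isPath_copy]
        exact phiWalk_isPath hadj' hab hac hadjab hid p0.toPath.1 p0.toPath.2
      have huniq := (T'.isTree.existsUnique_path (T'.leaf i) (T'.leaf j)).unique hp' hq
      rw [huniq, SimpleGraph.Walk.edges_copy] at he'
      obtain ⟨e, hm, hnee, rfl⟩ := phiWalk_edges_sub hadj' hab p0.toPath.1 e' he'
      exact ⟨e, ⟨⟨i, hi, j, hj, p0.toPath.1, p0.toPath.2, hm⟩, hnee⟩, rfl⟩
    · rintro ⟨e, ⟨⟨i, hi, j, hj, p, hp, he⟩, hnee⟩, rfl⟩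
      have hnee' : e ≠ s(a, b) := hnee
      refine ⟨i, hi, j, hj, (phiWalk hadj' hab p).copy (hleaf i) (hleaf j), ?_, ?_⟩
      · rw [SimpleGraph.Walk.isPath_copy]
        exact phiWalk_isPath hadj' hab hac hadjab hid p hp
      · rw [SimpleGraph.Walk.edges_copy]
        exact phiWalk_mem_edges hadj' hab p he hnee'
  -- weights correspond
  have hwpt : ∀ e ∈ T.G.edgeSet, e ≠ s(a, b) →
      T'.w (Sym2.map φ e) = T.w e + (if ∃ i, T.leaf i ∈ e then y0 / k else 0) := by
    intro e
    induction e using Sym2.ind with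
    | _ x y =>
      intro hxy hne
      rw [SimpleGraph.mem_edgeSet] at hxy
      obtain ⟨hpos, hneg⟩ := hw x y hxy hne
      rw [Sym2.map_pair_eq]
      by_cases hP : ∃ i, T.leaf i = x ∨ T.leaf i = y
      · rw [hpos hP, if_pos (by simpa [Sym2.mem_iff] using hP)]
      · rw [hneg hP, if_neg (by simpa [Sym2.mem_iff] using hP), add_zero]
  -- sums
  have hfinS : (T.subtreeEdges (↑I : Set (Fin n))).Finite := Set.toFinite _
  have hfinS' : (T'.subtreeEdges (↑I : Set (Fin n))).Finite := Set.toFinite _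
  have hAsubE : ∀ e ∈ hfinS.toFinset, e ∈ T.G.edgeSet := by
    intro e he
    rw [Set.Finite.mem_toFinset] at he
    obtain ⟨i, -, j, -, p, -, hm⟩ := he
    exact p.edges_subset_edgeSet hm
  have hDT : T.D I = ∑ e ∈ hfinS.toFinset, T.w e :=
    finsum_mem_eq_finite_toFinset_sum _ hfinS
  have hDT' : T'.D I = ∑ e ∈ hfinS'.toFinset, T'.w e :=
    finsum_mem_eq_finite_toFinset_sum _ hfinS'
  have himg : hfinS'.toFinset = (hfinS.toFinset.erase s(a, b)).image (Sym2.map φ) := by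
    ext e
    simp only [Set.Finite.mem_toFinset, hS'eq, Set.mem_image, Set.mem_diff,
      Set.mem_singleton_iff, Finset.mem_image, Finset.mem_erase]
    tauto
  have hinj : ∀ x ∈ hfinS.toFinset.erase s(a, b), ∀ y ∈ hfinS.toFinset.erase s(a, b),
      Sym2.map φ x = Sym2.map φ y → x = y := by
    intro x hx y hy hxy
    have hmx := Finset.mem_erase.mp hx
    have hmy := Finset.mem_erase.mp hy
    exact sym2_map_injOn hac hadjab hid
      ⟨hAsubE x hmx.2, hmx.1⟩ ⟨hAsubE y hmy.2, hmy.1⟩ hxy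
  rw [himg, Finset.sum_image hinj] at hDT'
  have hstep : ∑ e ∈ hfinS.toFinset.erase s(a, b), T'.w (Sym2.map φ e)
      = ∑ e ∈ hfinS.toFinset.erase s(a, b),
          (T.w e + (if ∃ i, T.leaf i ∈ e then y0 / k else 0)) := by
    refine Finset.sum_congr rfl ?_
    intro e he
    have he' := Finset.mem_erase.mp he
    exact hwpt e (hAsubE e he'.2) he'.1
  rw [hstep, Finset.sum_add_distrib] at hDT'
  have h1 : ∑ e ∈ hfinS.toFinset.erase s(a, b), T.w e = T.D I - y0 := by
    have := Finset.sum_erase_add hfinS.toFinset T.w (hfinS.mem_toFinset.mpr habS)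
    rw [hDT]
    rw [← hy0] at this
    linarith
  have hfilter : (hfinS.toFinset.erase s(a, b)).filter (fun e => ∃ i, T.leaf i ∈ e)
      = I.image (fun j => s(T.leaf j, nb j)) := by
    ext e
    simp only [Finset.mem_filter, Finset.mem_erase, Finset.mem_image,
      Set.Finite.mem_toFinset]
    constructor
    · rintro ⟨⟨hne, heS⟩, j, hj⟩
      have := hpend_char e heS j hj
      exact ⟨j, this.1, this.2.symm⟩
    · rintro ⟨j, hjI, rfl⟩
      exact ⟨⟨hpend_ne j, hpend_mem j hjI⟩, j, by simp [Sym2.mem_iff]⟩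
  have h2 : ∑ e ∈ hfinS.toFinset.erase s(a, b),
      (if ∃ i, T.leaf i ∈ e then y0 / k else 0) = y0 := by
    rw [← Finset.sum_filter, hfilter, Finset.sum_const,
      Finset.card_image_of_injective I hpend_inj, hI, nsmul_eq_mul]
    have hk0 : (k : ℝ) ≠ 0 := Nat.cast_ne_zero.mpr (by omega)
    field_simp
  rw [h1, h2] at hDT'
  rw [hDT']
  ring

end MainProof
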